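/- Let n11 = n22 = n > 0, n21 ≥ 2n, and n12 = 0. Then the η-NE region with feedback equals the η-NE region without feedback, i.e., B_LDIC/FB ∩ C_LDIC/FB = B_LDIC ∩ C_LDIC, for η = 0. -/
import Mathlib


/-- For n11 = n22 = n > 0, n21 ≥ 2n, n12 = 0 and η = 0, the NE region with
feedback equals the NE region without feedback. -/
theorem ne_region_eq_of_special_params (n n21 : ℕ) (hn : 0 < n) (h21 : 2 * n ≤ n21) :
    -- B_LDIC/FB ∩ C_LDIC/FB  (η = 0), with n11 = n22 = n, n12 = 0
    ({p : ℝ × ℝ |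
        max ((n : ℝ) - (0 : ℕ)) 0 ≤ p.1 ∧ max ((n : ℝ) - n21) 0 ≤ p.2} ∩
     {p : ℝ × ℝ | 0 ≤ p.1 ∧ 0 ≤ p.2 ∧
        p.1 ≤ min (max (n : ℝ) ((0 : ℕ) : ℝ)) (max (n : ℝ) (n21 : ℝ)) ∧
        p.2 ≤ min (max (n : ℝ) (n21 : ℝ)) (max (n : ℝ) ((0 : ℕ) : ℝ)) ∧
        p.1 + p.2 ≤ min (max (n : ℝ) (n21 : ℝ) + max ((n : ℝ) - n21) 0)
                        (max (n : ℝ) ((0 : ℕ) : ℝ) + max ((n : ℝ) - (0 : ℕ)) 0)})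
    =
    -- B_LDIC ∩ C_LDIC
    ({p : ℝ × ℝ |
        max ((n : ℝ) - (0 : ℕ)) 0 ≤ p.1 ∧
        p.1 ≤ (if (0 : ℕ) ≤ n then (n : ℝ) - min (max ((n : ℝ) - n21) 0) ((0 : ℕ) : ℝ)
               else min (max (((0 : ℕ) : ℝ) - max ((n : ℝ) - n21) 0) 0) (n : ℝ)) ∧
        max ((n : ℝ) - n21) 0 ≤ p.2 ∧
        p.2 ≤ (if n21 ≤ n then (n : ℝ) - min (max ((n : ℝ) - (0 : ℕ)) 0) (n21 : ℝ)
               else min (max ((n21 : ℝ) - max ((n : ℝ) - (0 : ℕ)) 0) 0) (n : ℝ))} ∩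
     {p : ℝ × ℝ | 0 ≤ p.1 ∧ 0 ≤ p.2 ∧
        p.1 ≤ (n : ℝ) ∧ p.2 ≤ (n : ℝ) ∧
        p.1 + p.2 ≤ max ((n : ℝ) - (0 : ℕ)) 0 + max (n : ℝ) ((0 : ℕ) : ℝ) ∧
        p.1 + p.2 ≤ max ((n : ℝ) - n21) 0 + max (n : ℝ) (n21 : ℝ) ∧
        p.1 + p.2 ≤ max (n21 : ℝ) (max ((n : ℝ) - (0 : ℕ)) 0)
                      + max ((0 : ℕ) : ℝ) (max ((n : ℝ) - n21) 0) ∧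
        2 * p.1 + p.2 ≤ max (n : ℝ) (n21 : ℝ) + max ((n : ℝ) - (0 : ℕ)) 0
                      + max ((0 : ℕ) : ℝ) (max ((n : ℝ) - n21) 0) ∧
        p.1 + 2 * p.2 ≤ max (n : ℝ) ((0 : ℕ) : ℝ) + max ((n : ℝ) - n21) 0
                      + max (n21 : ℝ) (max ((n : ℝ) - (0 : ℕ)) 0)}) := by
  have hnr : (0:ℝ) < (n:ℝ) := by exact_mod_cast hn
  have h21r : 2 * (n:ℝ) ≤ (n21:ℝ) := by exact_mod_cast h21
  have hlt : (n:ℝ) < (n21:ℝ) := by linarith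
  have hm1 : max ((n:ℝ) - n21) 0 = 0 := max_eq_right (by linarith)
  have hm2 : max ((n:ℝ) - ((0:ℕ):ℝ)) 0 = (n:ℝ) := by simp [max_eq_left hnr.le]
  have hm3 : max (n:ℝ) ((0:ℕ):ℝ) = (n:ℝ) := by simp [max_eq_left hnr.le]
  have hm3' : max (n:ℝ) (0:ℝ) = (n:ℝ) := max_eq_left hnr.le
  have hm4 : max (n:ℝ) (n21:ℝ) = (n21:ℝ) := max_eq_right hlt.le
  have hm4' : max (n21:ℝ) (n:ℝ) = (n21:ℝ) := max_eq_left hlt.le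
  have hm5 : max ((n21:ℝ) - n) (0:ℝ) = (n21:ℝ) - n := max_eq_left (by linarith)
  have hmin1 : min (n:ℝ) (n21:ℝ) = (n:ℝ) := min_eq_left hlt.le
  have hmin2 : min (n21:ℝ) (n:ℝ) = (n:ℝ) := min_eq_right hlt.le
  have hmin3 : min (n21:ℝ) ((n:ℝ) + n) = (n:ℝ) + n := min_eq_right (by linarith)
  have hmin4 : min ((n21:ℝ) - n) (n:ℝ) = (n:ℝ) := min_eq_right (by linarith)
  have hif1 : ((0:ℕ) ≤ n) = True := by simp
  have hif2 : (n21 ≤ n) = False := by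
    simp only [eq_iff_iff, iff_false]
    intro h
    have : (n21:ℝ) ≤ (n:ℝ) := by exact_mod_cast h
    linarith
  ext ⟨x, y⟩
  simp only [Set.mem_inter_iff, Set.mem_setOf_eq, Nat.cast_zero, hm1, hm2, hm3, hm3', hm4,
    hm4', hm5, hmin1, hmin2, hmin3, hmin4, hif1, hif2, if_true, if_false,
    add_zero, zero_add, sub_zero, min_self, max_self]
  constructor
  · rintro ⟨⟨h1, h2⟩, h3, h4, h5, h6, h7⟩
    refine ⟨⟨h1, by linarith, h2, by linarith⟩, h3, h4, by linarith, by linarith,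
      by linarith, by linarith, by linarith, by linarith, by linarith⟩
  · rintro ⟨⟨h1, h2, h3, h4⟩, h5, h6, h7, h8, h9, h10, h11, h12, h13⟩
    exact ⟨⟨h1, h3⟩, h5, h6, by linarith, by linarith, by linarith⟩
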